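/- Let R be a unital associative ℂ-algebra and let e, i be finite index types. Let S = [[S_ee, S_ei],[S_ie, S_ii]] be a 2×2 block matrix over R such that I + S is invertible and I_e + S_ee is invertible, and let E = (2/i)·(I + S)⁻¹(I − S) with blocks [[E_ee, E_ei],[E_ie, E_ii]]. Define 𝒮_ii = S_ii − S_ie (I_e + S_ee)⁻¹ S_ei (so that I_i + 𝒮_ii is the Schur complement of I + S shortening e). Then I_i + 𝒮_ii is invertible, E_ii = (2/i)·(I_i + 𝒮_ii)⁻¹(I_i − 𝒮_ii), and E_ii is invertible if and only if I_i − 𝒮_ii is invertible. -/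

import Mathlib

set_option maxHeartbeats 1000000

/-- test for invertibility of the internal Stratonovich block
`E_ii` purely in terms of the blocks of the scattering matrix `S`:
with `𝒮_ii = S_ii − S_ie (I_e + S_ee)⁻¹ S_ei`, one has
`E_ii = (2/i)(I_i + 𝒮_ii)⁻¹(I_i − 𝒮_ii)`, and `E_ii` is invertible iff
`I_i − 𝒮_ii` is invertible. -/
theorem Eii_invertible_iff
    {R : Type*} [Ring R] [Algebra ℂ R]
    {e i : Type*} [Fintype e] [Fintype i] [DecidableEq e] [DecidableEq i]
    (S : Matrix (e ⊕ i) (e ⊕ i) R)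
    [Invertible (1 + S)]
    [Invertible (1 + S.toBlocks₁₁)]
    (E : Matrix (e ⊕ i) (e ⊕ i) R)
    (hE : E = (2 / Complex.I) • (⅟(1 + S) * (1 - S)))
    (scrS : Matrix i i R)
    (hscrS : scrS = S.toBlocks₂₂ - S.toBlocks₂₁ * ⅟(1 + S.toBlocks₁₁) * S.toBlocks₁₂) :
    IsUnit (1 + scrS) ∧
      E.toBlocks₂₂ = (2 / Complex.I) • (Ring.inverse (1 + scrS) * (1 - scrS)) ∧
      (IsUnit E.toBlocks₂₂ ↔ IsUnit (1 - scrS)) := by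
  set N := ⅟(1 + S) with hNdef
  set P := N.toBlocks₁₁ with hP
  set Q := N.toBlocks₁₂ with hQdef
  set R' := N.toBlocks₂₁ with hR'def
  set T := N.toBlocks₂₂ with hTdef
  -- block decomposition of 1 + S
  have h1S : (1 : Matrix (e ⊕ i) (e ⊕ i) R) + S
      = Matrix.fromBlocks (1 + S.toBlocks₁₁) S.toBlocks₁₂ S.toBlocks₂₁ (1 + S.toBlocks₂₂) := by
    conv_lhs => rw [← S.fromBlocks_toBlocks, ← Matrix.fromBlocks_one,
      Matrix.fromBlocks_add]
    simp
  have hNb : N = Matrix.fromBlocks P Q R' T := (Matrix.fromBlocks_toBlocks N).symm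
  have hMN : Matrix.fromBlocks
        ((1 + S.toBlocks₁₁) * P + S.toBlocks₁₂ * R')
        ((1 + S.toBlocks₁₁) * Q + S.toBlocks₁₂ * T)
        (S.toBlocks₂₁ * P + (1 + S.toBlocks₂₂) * R')
        (S.toBlocks₂₁ * Q + (1 + S.toBlocks₂₂) * T)
      = Matrix.fromBlocks 1 0 0 (1 : Matrix i i R) := by
    rw [← Matrix.fromBlocks_multiply, ← h1S, ← hNb, Matrix.fromBlocks_one]
    exact mul_invOf_self _
  have hNM : Matrix.fromBlocks
        (P * (1 + S.toBlocks₁₁) + Q * S.toBlocks₂₁)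
        (P * S.toBlocks₁₂ + Q * (1 + S.toBlocks₂₂))
        (R' * (1 + S.toBlocks₁₁) + T * S.toBlocks₂₁)
        (R' * S.toBlocks₁₂ + T * (1 + S.toBlocks₂₂))
      = Matrix.fromBlocks 1 0 0 (1 : Matrix i i R) := by
    rw [← Matrix.fromBlocks_multiply, ← h1S, ← hNb, Matrix.fromBlocks_one]
    exact invOf_mul_self _
  have e12 : (1 + S.toBlocks₁₁) * Q + S.toBlocks₁₂ * T = 0 := by
    simpa [-Matrix.fromBlocks_one] using congrArg Matrix.toBlocks₁₂ hMN
  have e22 : S.toBlocks₂₁ * Q + (1 + S.toBlocks₂₂) * T = 1 := by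
    simpa [-Matrix.fromBlocks_one] using congrArg Matrix.toBlocks₂₂ hMN
  have f21 : R' * (1 + S.toBlocks₁₁) + T * S.toBlocks₂₁ = 0 := by
    simpa [-Matrix.fromBlocks_one] using congrArg Matrix.toBlocks₂₁ hNM
  have f22 : R' * S.toBlocks₁₂ + T * (1 + S.toBlocks₂₂) = 1 := by
    simpa [-Matrix.fromBlocks_one] using congrArg Matrix.toBlocks₂₂ hNM
  -- solve for Q and R'
  have hQ : Q = -(⅟(1 + S.toBlocks₁₁) * (S.toBlocks₁₂ * T)) := by
    have h' : (1 + S.toBlocks₁₁) * Q = -(S.toBlocks₁₂ * T) :=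
      eq_neg_of_add_eq_zero_left e12
    calc Q = ⅟(1 + S.toBlocks₁₁) * ((1 + S.toBlocks₁₁) * Q) := by
            rw [← Matrix.mul_assoc, invOf_mul_self, Matrix.one_mul]
      _ = ⅟(1 + S.toBlocks₁₁) * -(S.toBlocks₁₂ * T) := by rw [h']
      _ = -(⅟(1 + S.toBlocks₁₁) * (S.toBlocks₁₂ * T)) := by rw [Matrix.mul_neg]
  have hR : R' = -(T * S.toBlocks₂₁) * ⅟(1 + S.toBlocks₁₁) := by
    have h' : R' * (1 + S.toBlocks₁₁) = -(T * S.toBlocks₂₁) :=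
      eq_neg_of_add_eq_zero_left f21
    calc R' = R' * (1 + S.toBlocks₁₁) * ⅟(1 + S.toBlocks₁₁) := by
            rw [Matrix.mul_assoc, mul_invOf_self, Matrix.mul_one]
      _ = -(T * S.toBlocks₂₁) * ⅟(1 + S.toBlocks₁₁) := by rw [h']
  have hsum : (1 + scrS : Matrix i i R)
      = (1 + S.toBlocks₂₂) - S.toBlocks₂₁ * ⅟(1 + S.toBlocks₁₁) * S.toBlocks₁₂ := by
    rw [hscrS]; abel
  -- T is a two-sided inverse of 1 + scrS
  have hΔT : (1 + scrS) * T = 1 := by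
    rw [hsum, Matrix.sub_mul]
    have h'' : S.toBlocks₂₁ * ⅟(1 + S.toBlocks₁₁) * S.toBlocks₁₂ * T
        = -(S.toBlocks₂₁ * Q) := by
      rw [hQ, Matrix.mul_neg, ← Matrix.mul_assoc, ← Matrix.mul_assoc, neg_neg]
    rw [h'', sub_neg_eq_add, add_comm, e22]
  have hTΔ : T * (1 + scrS) = 1 := by
    rw [hsum, Matrix.mul_sub]
    have h'' : T * (S.toBlocks₂₁ * ⅟(1 + S.toBlocks₁₁) * S.toBlocks₁₂)
        = -(R' * S.toBlocks₁₂) := by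
      rw [hR, Matrix.neg_mul, Matrix.neg_mul, neg_neg]
      rw [← Matrix.mul_assoc, ← Matrix.mul_assoc]
    rw [h'', sub_neg_eq_add, add_comm, f22]
  letI iU : Invertible (1 + scrS) := ⟨T, hTΔ, hΔT⟩
  letI iT : Invertible T := ⟨1 + scrS, hΔT, hTΔ⟩
  have hT : Ring.inverse (1 + scrS) = T := by
    rw [Ring.inverse_invertible]
    exact invOf_eq_right_inv hΔT
  -- compute N * (1 - S)
  have hprod : N * (1 - S) = N + N - 1 := by
    have h2 : (1 : Matrix (e ⊕ i) (e ⊕ i) R) - S = (1 + 1) - (1 + S) := by abel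
    rw [h2, Matrix.mul_sub, Matrix.mul_add, Matrix.mul_one, hNdef,
      invOf_mul_self]
  have hTapply : ∀ k l, T k l = N (Sum.inr k) (Sum.inr l) := fun _ _ => rfl
  have hE22 : E.toBlocks₂₂ = (2 / Complex.I) • (T + T - 1) := by
    rw [hE, hprod]
    ext k l
    simp [Matrix.toBlocks₂₂, hTapply, Matrix.one_apply]
  have hTprod : T * (1 - scrS) = T + T - 1 := by
    have h3 : (1 : Matrix i i R) - scrS = (1 + 1) - (1 + scrS) := by abel
    rw [h3, Matrix.mul_sub, Matrix.mul_add, Matrix.mul_one, hTΔ]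
  refine ⟨isUnit_of_invertible _, ?_, ?_⟩
  · rw [hE22, hT, hTprod]
  · rw [hE22, ← hTprod]
    have hc : IsUnit ((2 / Complex.I : ℂ) • (1 : Matrix i i R)) := by
      have hc0 : (2 / Complex.I : ℂ) ≠ 0 := by
        simp [Complex.I_ne_zero]
      have := (Ne.isUnit hc0).map (algebraMap ℂ (Matrix i i R))
      rwa [Algebra.algebraMap_eq_smul_one] at this
    have key : ∀ M X : Matrix i i R, IsUnit M → (IsUnit (M * X) ↔ IsUnit X) := by
      rintro M X ⟨u, rfl⟩
      exact Units.isUnit_units_mul u X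
    have hfac : (2 / Complex.I : ℂ) • (T * (1 - scrS))
        = (((2 / Complex.I : ℂ) • (1 : Matrix i i R)) * T) * (1 - scrS) := by
      simp [smul_mul_assoc]
    rw [hfac]
    exact key _ _ (hc.mul (isUnit_of_invertible _))
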